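/- Let X be an A–B imprimitivity bimodule, let π ∈ B̂, and let (π_α) be a net in B̂ such that π is a cluster point of (π_α). Then M_U(π,(π_α)) = M_U(X-Ind π, (X-Ind π_α)). -/

import Mathlib

noncomputable section

open scoped ComplexInnerProductSpace ENNReal

/-- A bundled complex Hilbert space. -/
structure HilbertBundle : Type 1 where
  carrier : Type
  [nacg : NormedAddCommGroup carrier]
  [ips : InnerProductSpace ℂ carrier]
  [cs : CompleteSpace carrier]

attribute [instance] HilbertBundle.nacg HilbertBundle.ips HilbertBundle.cs

/-- A representation of a (possibly non-unital) C⋆-algebra on a Hilbert space, i.e. a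
⋆-homomorphism into the bounded operators. -/
structure CStarRep (B : Type) [NonUnitalCStarAlgebra B] : Type 1 where
  space : HilbertBundle
  π : B →⋆ₙₐ[ℂ] (space.carrier →L[ℂ] space.carrier)

/-- An `A`–`B` imprimitivity bimodule: a complex vector space `X` which is a full left Hilbert
`A`-module and a full right Hilbert `B`-module, with commuting actions, satisfying
`⟨x,y⟩_A ⬝ z = x ⬝ ⟨y,z⟩_B`.  The `A`-valued inner product is linear in the first variable and
the `B`-valued one in the second.  `X` is complete for the norm `‖x‖ = ‖⟨x,x⟩_B‖^{1/2}`
(which coincides with `‖⟨x,x⟩_A‖^{1/2}`). -/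
structure ImprimitivityBimodule (A B : Type) [NonUnitalCStarAlgebra A]
    [NonUnitalCStarAlgebra B] : Type 1 where
  X : Type
  [nacg : NormedAddCommGroup X]
  [nsp : NormedSpace ℂ X]
  [cs : CompleteSpace X]
  smulA : A → X → X
  smulB : X → B → X
  innA : X → X → A
  innB : X → X → B
  -- `X` is a left `A`-module
  smulA_add : ∀ a x y, smulA a (x + y) = smulA a x + smulA a y
  add_smulA : ∀ a a' x, smulA (a + a') x = smulA a x + smulA a' x
  mul_smulA : ∀ a a' x, smulA (a * a') x = smulA a (smulA a' x)
  smulA_smul : ∀ (c : ℂ) a x, smulA (c • a) x = c • smulA a x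
  smulA_smul' : ∀ (c : ℂ) a x, smulA a (c • x) = c • smulA a x
  -- `X` is a right `B`-module
  smulB_add : ∀ x y b, smulB (x + y) b = smulB x b + smulB y b
  smulB_add' : ∀ x b b', smulB x (b + b') = smulB x b + smulB x b'
  smulB_mul : ∀ x b b', smulB x (b * b') = smulB (smulB x b) b'
  smulB_smul : ∀ (c : ℂ) x b, smulB x (c • b) = c • smulB x b
  smulB_smul' : ∀ (c : ℂ) x b, smulB (c • x) b = c • smulB x b
  -- the two actions commute
  smul_commutes : ∀ a x b, smulB (smulA a x) b = smulA a (smulB x b)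
  -- the `A`-valued inner product (linear in the first variable)
  innA_add : ∀ x y z, innA (x + y) z = innA x z + innA y z
  innA_add' : ∀ x y z, innA x (y + z) = innA x y + innA x z
  innA_smul : ∀ (c : ℂ) x y, innA (c • x) y = c • innA x y
  innA_star : ∀ x y, star (innA x y) = innA y x
  innA_smulA : ∀ a x y, innA (smulA a x) y = a * innA x y
  innA_pos : ∀ x, ∃ a, innA x x = star a * a
  innA_definite : ∀ x, innA x x = 0 → x = 0
  -- the `B`-valued inner product (linear in the second variable)
  innB_add : ∀ x y z, innB (x + y) z = innB x z + innB y z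
  innB_add' : ∀ x y z, innB x (y + z) = innB x y + innB x z
  innB_smul : ∀ (c : ℂ) x y, innB x (c • y) = c • innB x y
  innB_star : ∀ x y, star (innB x y) = innB y x
  innB_smulB : ∀ x y b, innB x (smulB y b) = innB x y * b
  innB_pos : ∀ x, ∃ b, innB x x = star b * b
  innB_definite : ∀ x, innB x x = 0 → x = 0
  -- the norm on `X` is the Hilbert-module norm for both inner products
  norm_innA : ∀ x, ‖x‖ ^ 2 = ‖innA x x‖
  norm_innB : ∀ x, ‖x‖ ^ 2 = ‖innB x x‖
  -- fullness of both inner products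
  full_innA : closure (Submodule.span ℂ {a : A | ∃ x y, a = innA x y} : Set A) = Set.univ
  full_innB : closure (Submodule.span ℂ {b : B | ∃ x y, b = innB x y} : Set B) = Set.univ
  -- the imprimitivity condition `⟨x,y⟩_A ⬝ z = x ⬝ ⟨y,z⟩_B`
  imprimitivity : ∀ x y z, smulA (innA x y) z = smulB x (innB y z)

attribute [instance] ImprimitivityBimodule.nacg ImprimitivityBimodule.nsp
  ImprimitivityBimodule.cs
/-- A realization of the induced representation `X-Ind π` of `A` on `X ⊗_B H`, given an
`A`–`B` imprimitivity bimodule `X` and a representation `π` of `B` on `H`.  The map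
`t x h = x ⊗ h` is bilinear, `B`-balanced, has dense range span, satisfies the pre-inner
product identity `(x ⊗ h | y ⊗ k) = (π(⟨y,x⟩_B) h | k)` (written below in Mathlib's
convention, where the inner product is conjugate-linear in the first variable), and
intertwines the `A`-actions: `(X-Ind π)(a)(x ⊗ h) = (a⬝x) ⊗ h`. -/
structure InducedRepWitness {A B : Type} [NonUnitalCStarAlgebra A] [NonUnitalCStarAlgebra B]
    (E : ImprimitivityBimodule A B) (ρ : CStarRep B) (ρ' : CStarRep A) : Type 1 where
  t : E.X → ρ.space.carrier → ρ'.space.carrier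
  t_add_left : ∀ x y h, t (x + y) h = t x h + t y h
  t_add_right : ∀ x h k, t x (h + k) = t x h + t x k
  t_smul_left : ∀ (c : ℂ) x h, t (c • x) h = c • t x h
  t_smul_right : ∀ (c : ℂ) x h, t x (c • h) = c • t x h
  t_balanced : ∀ x b h, t (E.smulB x b) h = t x (ρ.π b h)
  t_inner : ∀ x y h k, ⟪t y k, t x h⟫ = ⟪k, ρ.π (E.innB y x) h⟫
  t_dense : closure (Submodule.span ℂ {v : ρ'.space.carrier | ∃ x h, v = t x h} :
      Set ρ'.space.carrier) = Set.univ
  t_intertwine : ∀ a x h, ρ'.π a (t x h) = t (E.smulA a x) h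
/-- (Topological) irreducibility of a representation: it is non-zero and has no non-trivial
closed invariant subspaces. -/
def CStarRep.Irreducible {B : Type} [NonUnitalCStarAlgebra B] (ρ : CStarRep B) : Prop :=
  (∃ b, ρ.π b ≠ 0) ∧
    ∀ K : Submodule ℂ ρ.space.carrier, IsClosed (K : Set ρ.space.carrier) →
      (∀ b, ∀ x ∈ K, ρ.π b x ∈ K) → K = ⊥ ∨ K = ⊤

/-- The irreducible representations of `B`; together with the topology below this serves as
the spectrum `B̂` of `B` (all notions considered here are invariant under unitary
equivalence, so may be computed on representatives). -/
def IrrRep (B : Type) [NonUnitalCStarAlgebra B] : Type 1 := {ρ : CStarRep B // ρ.Irreducible}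

/-- The topology on the spectrum: the pullback along `π ↦ ker π` of the Jacobson (hull-kernel)
topology on `Prim B`; the sets `{π | π(b) ≠ 0}` form a subbasis for it. -/
instance (B : Type) [NonUnitalCStarAlgebra B] : TopologicalSpace (IrrRep B) :=
  TopologicalSpace.generateFrom {U | ∃ b : B, U = {ρ : IrrRep B | ρ.1.π b ≠ 0}}
/-- The rank of a bounded operator, as an element of `{0,1,2,...} ∪ {∞}`. -/
def opRank {H : Type} [NormedAddCommGroup H] [InnerProductSpace ℂ H] (T : H →L[ℂ] H) : ℕ∞ :=
  (Module.rank ℂ (LinearMap.range (T : H →ₗ[ℂ] H))).toENat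

/-- A bundled nonempty directed preorder, the index of a net. -/
structure DirectedIndex : Type 1 where
  ι : Type
  [pre : Preorder ι]
  [dir : IsDirected ι (· ≤ ·)]
  [ne : Nonempty ι]

attribute [instance] DirectedIndex.pre DirectedIndex.dir DirectedIndex.ne

/-- The upper multiplicity `M_U(σ, (σ_α))` of `σ ∈ B̂` relative to a net `(σ_α)` in `B̂`
having `σ` as a cluster point.  It is characterized by: `M_U(σ, (σ_α)) ≤ k` if and only if
there exists `b ∈ B` with `σ(b) ≠ 0` and `rank σ_α(b) ≤ k` eventually. -/
def upperMult {B : Type} [NonUnitalCStarAlgebra B] {ι : Type} [Preorder ι]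
    (σ : IrrRep B) (net : ι → IrrRep B) : ℕ∞ :=
  sInf {k : ℕ∞ | ∃ b : B, σ.1.π b ≠ 0 ∧
    ∀ᶠ α in Filter.atTop, opRank ((net α).1.π b) ≤ k}

/-- The lower multiplicity `M_L(σ, (σ_α))`: the minimum of `M_U(σ, (σ_{α_i}))` over all
subnets `(σ_{α_i})` of `(σ_α)`. -/
def lowerMult {B : Type} [NonUnitalCStarAlgebra B] {ι : Type} [Preorder ι]
    (σ : IrrRep B) (net : ι → IrrRep B) : ℕ∞ :=
  sInf {m : ℕ∞ | ∃ (D : DirectedIndex) (φ : D.ι → ι),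
    Filter.Tendsto φ Filter.atTop Filter.atTop ∧ m = upperMult σ (net ∘ φ)}

/-- Unitary equivalence of representations. -/
def UEquiv {B : Type} [NonUnitalCStarAlgebra B] (ρ₁ ρ₂ : CStarRep B) : Prop :=
  ∃ U : ρ₁.space.carrier ≃ₗᵢ[ℂ] ρ₂.space.carrier, ∀ b x, U (ρ₁.π b x) = ρ₂.π b (U x)

/-- The (absolute) upper multiplicity `M_U(σ)`: the supremum of `M_U(σ, (σ_α))` over all nets
`(σ_α)` in `B̂` converging to `σ`. -/
def upperMultAbs {B : Type} [NonUnitalCStarAlgebra B] (σ : IrrRep B) : ℕ∞ :=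
  sSup {m : ℕ∞ | ∃ (D : DirectedIndex) (net : D.ι → IrrRep B),
    Filter.Tendsto net Filter.atTop (nhds σ) ∧ m = upperMult σ net}

/-- The (absolute) lower multiplicity `M_L(σ)`, defined when the (unitary equivalence class
of) `σ` is not open in `B̂`: the infimum of `M_L(σ, (σ_α))` over all nets `(σ_α)` in
`B̂ \ {σ}` converging to `σ`. -/
def lowerMultAbs {B : Type} [NonUnitalCStarAlgebra B] (σ : IrrRep B) : ℕ∞ :=
  sInf {m : ℕ∞ | ∃ (D : DirectedIndex) (net : D.ι → IrrRep B),
    (∀ α, ¬ UEquiv (net α).1 σ.1) ∧ Filter.Tendsto net Filter.atTop (nhds σ) ∧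
    m = lowerMult σ net}
section AuxProof

open scoped CStarAlgebra

variable {A B : Type} [NonUnitalCStarAlgebra A] [NonUnitalCStarAlgebra B]

/-- A continuous linear map vanishing on a set whose span is dense is zero. -/
lemma clm_eq_zero_of_dense {H H' : Type} [NormedAddCommGroup H] [NormedSpace ℂ H]
    [NormedAddCommGroup H'] [NormedSpace ℂ H']
    (f : H →L[ℂ] H') (S : Set H)
    (hd : closure (Submodule.span ℂ S : Set H) = Set.univ)
    (h0 : ∀ v ∈ S, f v = 0) : f = 0 := by
  ext v
  have h1 : (Submodule.span ℂ S : Set H) ⊆ {w : H | f w = 0} := by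
    intro w hw
    have hk : Submodule.span ℂ S ≤ LinearMap.ker (f : H →ₗ[ℂ] H') :=
      Submodule.span_le.mpr (fun u hu => LinearMap.mem_ker.mpr (h0 u hu))
    exact LinearMap.mem_ker.mp (hk hw)
  have hcl : IsClosed {w : H | f w = 0} := isClosed_eq f.continuous continuous_const
  have h2 : (Set.univ : Set H) ⊆ {w : H | f w = 0} := by
    rw [← hd]; exact closure_minimal h1 hcl
  exact h2 (Set.mem_univ v)

variable {E : ImprimitivityBimodule A B} {ρ : CStarRep B} {ρ' : CStarRep A}

/-- The map `k ↦ x ⊗ k` as a continuous linear map. -/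
noncomputable def Tmap (W : InducedRepWitness E ρ ρ') (x : E.X) :
    ρ.space.carrier →L[ℂ] ρ'.space.carrier :=
  LinearMap.mkContinuous
    { toFun := fun k => W.t x k
      map_add' := fun h k => W.t_add_right x h k
      map_smul' := fun c k => W.t_smul_right c x k }
    (Real.sqrt ‖ρ.π (E.innB x x)‖)
    (fun k => by
      simp only [LinearMap.coe_mk, AddHom.coe_mk]
      have hsq : ‖W.t x k‖ ^ 2 ≤ ‖ρ.π (E.innB x x)‖ * ‖k‖ ^ 2 := by
        have h1 : (⟪W.t x k, W.t x k⟫ : ℂ) = ⟪k, ρ.π (E.innB x x) k⟫ := W.t_inner x x k k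
        have h2 : ‖W.t x k‖ ^ 2 = ‖(⟪k, ρ.π (E.innB x x) k⟫ : ℂ)‖ := by
          rw [← h1, inner_self_eq_norm_sq_to_K]
          simp
        calc ‖W.t x k‖ ^ 2 = ‖(⟪k, ρ.π (E.innB x x) k⟫ : ℂ)‖ := h2
          _ ≤ ‖k‖ * ‖ρ.π (E.innB x x) k‖ := norm_inner_le_norm _ _
          _ ≤ ‖k‖ * (‖ρ.π (E.innB x x)‖ * ‖k‖) := by
              gcongr
              exact (ρ.π (E.innB x x)).le_opNorm k
          _ = ‖ρ.π (E.innB x x)‖ * ‖k‖ ^ 2 := by ring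
      calc ‖W.t x k‖ = Real.sqrt (‖W.t x k‖ ^ 2) := by rw [Real.sqrt_sq (norm_nonneg _)]
        _ ≤ Real.sqrt (‖ρ.π (E.innB x x)‖ * ‖k‖ ^ 2) := Real.sqrt_le_sqrt hsq
        _ = Real.sqrt ‖ρ.π (E.innB x x)‖ * ‖k‖ := by
            rw [Real.sqrt_mul (norm_nonneg _), Real.sqrt_sq (norm_nonneg _)])

@[simp] lemma Tmap_apply (W : InducedRepWitness E ρ ρ') (x : E.X) (k : ρ.space.carrier) :
    Tmap W x k = W.t x k := rfl

lemma adjoint_Tmap_t (W : InducedRepWitness E ρ ρ') (y z : E.X) (h : ρ.space.carrier) :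
    ContinuousLinearMap.adjoint (Tmap W y) (W.t z h) = ρ.π (E.innB y z) h := by
  apply ext_inner_left ℂ
  intro k
  rw [ContinuousLinearMap.adjoint_inner_right]
  exact W.t_inner z y h k

lemma factor_forward (W : InducedRepWitness E ρ ρ') (x y : E.X) (b : B) :
    ρ'.π (E.innA (E.smulB x b) y)
      = (Tmap W x) ∘L (ρ.π b) ∘L (ContinuousLinearMap.adjoint (Tmap W y)) := by
  have key : ∀ z h, ρ'.π (E.innA (E.smulB x b) y) (W.t z h)
      = ((Tmap W x) ∘L (ρ.π b) ∘L (ContinuousLinearMap.adjoint (Tmap W y))) (W.t z h) := by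
    intro z h
    have h1 : E.smulA (E.innA (E.smulB x b) y) z = E.smulB x (b * E.innB y z) := by
      rw [E.imprimitivity, ← E.smulB_mul]
    rw [W.t_intertwine, h1, W.t_balanced, map_mul]
    simp only [ContinuousLinearMap.comp_apply, adjoint_Tmap_t, Tmap_apply,
      ContinuousLinearMap.mul_apply]
  have hz := clm_eq_zero_of_dense
      (ρ'.π (E.innA (E.smulB x b) y)
        - ((Tmap W x) ∘L (ρ.π b) ∘L (ContinuousLinearMap.adjoint (Tmap W y))))
      _ W.t_dense (by
        rintro v ⟨z, h, rfl⟩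
        simp only [ContinuousLinearMap.sub_apply, key z h, sub_self])
  exact sub_eq_zero.mp hz

lemma factor_reverse (W : InducedRepWitness E ρ ρ') (x y : E.X) (a : A) :
    ρ.π (E.innB y (E.smulA a x))
      = (ContinuousLinearMap.adjoint (Tmap W y)) ∘L (ρ'.π a) ∘L (Tmap W x) := by
  ext h
  apply ext_inner_left ℂ
  intro k
  rw [ContinuousLinearMap.comp_apply, ContinuousLinearMap.comp_apply,
    ContinuousLinearMap.adjoint_inner_right, Tmap_apply, Tmap_apply, W.t_intertwine]
  exact (W.t_inner (E.smulA a x) y h k).symm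

lemma opRank_comp_comp_le {H H' : Type} [NormedAddCommGroup H] [InnerProductSpace ℂ H]
    [NormedAddCommGroup H'] [InnerProductSpace ℂ H']
    (f : H' →L[ℂ] H) (g : H' →L[ℂ] H') (h : H →L[ℂ] H') :
    opRank (f ∘L g ∘L h) ≤ opRank g := by
  apply Cardinal.enat_gc.monotone_u
  show LinearMap.rank ((f ∘L g ∘L h : H →L[ℂ] H) : H →ₗ[ℂ] H) ≤
    LinearMap.rank ((g : H' →ₗ[ℂ] H'))
  have e1 : ((f ∘L g ∘L h : H →L[ℂ] H) : H →ₗ[ℂ] H)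
      = (f : H' →ₗ[ℂ] H).comp (((g ∘L h : H →L[ℂ] H') : H →ₗ[ℂ] H')) := rfl
  have e2 : ((g ∘L h : H →L[ℂ] H') : H →ₗ[ℂ] H')
      = (g : H' →ₗ[ℂ] H').comp ((h : H →ₗ[ℂ] H')) := rfl
  rw [e1, e2]
  exact le_trans (LinearMap.rank_comp_le_right _ _)
    (LinearMap.rank_comp_le_left _ _)

/-- Vanishing of `φ (ρ c w)` on the inner products implies vanishing everywhere. -/
lemma full_vanish (E : ImprimitivityBimodule A B) (ρ : CStarRep B) {V : Type}
    [NormedAddCommGroup V] [NormedSpace ℂ V]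
    (φ : ρ.space.carrier →L[ℂ] V) (w : ρ.space.carrier)
    (h0 : ∀ x y, φ (ρ.π (E.innB x y) w) = 0) : ∀ c, φ (ρ.π c w) = 0 := by
  intro c
  let f : B →ₗ[ℂ] V :=
    { toFun := fun c => φ (ρ.π c w)
      map_add' := fun c c' => by
        simp only [map_add, ContinuousLinearMap.add_apply]
      map_smul' := fun s c => by
        simp only [map_smul, ContinuousLinearMap.smul_apply, RingHom.id_apply] }
  have hf : Continuous f := by
    have h1 : Continuous fun c : B => ρ.π c := map_continuous ρ.π
    have h2 : Continuous fun c : B => ρ.π c w := by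
      exact (ContinuousLinearMap.apply ℂ ρ.space.carrier w).continuous.comp h1
    exact φ.continuous.comp h2
  have hsub : (Submodule.span ℂ {b : B | ∃ x y, b = E.innB x y} : Set B)
      ⊆ {b : B | f b = 0} := by
    intro u hu
    have : Submodule.span ℂ {b : B | ∃ x y, b = E.innB x y} ≤ LinearMap.ker f := by
      rw [Submodule.span_le]
      rintro v ⟨x, y, rfl⟩
      exact LinearMap.mem_ker.mpr (h0 x y)
    exact LinearMap.mem_ker.mp (this hu)
  have hcl : IsClosed {b : B | f b = 0} := isClosed_eq hf continuous_const
  have huniv : (Set.univ : Set B) ⊆ {b : B | f b = 0} := by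
    rw [← E.full_innB]; exact closure_minimal hsub hcl
  exact huniv (Set.mem_univ c)

/-- Nondegeneracy: an operator vanishing on the range of an irreducible rep is zero. -/
lemma vanish_of_vanish_range {ρ : CStarRep B} (hirr : ρ.Irreducible)
    (T : ρ.space.carrier →L[ℂ] ρ.space.carrier)
    (hT : ∀ c h, T (ρ.π c h) = 0) : T = 0 := by
  set S : Set ρ.space.carrier := {v | ∃ c h, v = ρ.π c h} with hS
  set K := (Submodule.span ℂ S).topologicalClosure with hK
  have hKcl : IsClosed (K : Set ρ.space.carrier) := Submodule.isClosed_topologicalClosure _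
  have hKinv : ∀ c : B, ∀ v ∈ K, ρ.π c v ∈ K := by
    intro c v hv
    have h1 : (Submodule.span ℂ S : Set ρ.space.carrier)
        ⊆ (ρ.π c) ⁻¹' (K : Set ρ.space.carrier) := by
      intro u hu
      have : Submodule.span ℂ S ≤ Submodule.comap ((ρ.π c) : _ →ₗ[ℂ] _) K := by
        rw [Submodule.span_le]
        rintro w ⟨c', h, rfl⟩
        simp only [Set.mem_preimage, SetLike.mem_coe, Submodule.mem_comap,
          ContinuousLinearMap.coe_coe]
        have he : (ρ.π c) (ρ.π c' h) = ρ.π (c * c') h := by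
          rw [map_mul]; rfl
        rw [he]
        exact Submodule.le_topologicalClosure _ (Submodule.subset_span ⟨c * c', h, rfl⟩)
      exact this hu
    have h2 : closure (Submodule.span ℂ S : Set ρ.space.carrier)
        ⊆ (ρ.π c) ⁻¹' (K : Set ρ.space.carrier) :=
      closure_minimal h1 (hKcl.preimage (ρ.π c).continuous)
    have h3 : v ∈ closure (Submodule.span ℂ S : Set ρ.space.carrier) := by
      rw [← Submodule.topologicalClosure_coe]; exact hv
    exact h2 h3
  rcases hirr.2 K hKcl hKinv with hbot | htop
  · exfalso
    obtain ⟨b₀, hb₀⟩ := hirr.1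
    apply hb₀
    ext h
    have : ρ.π b₀ h ∈ K := Submodule.le_topologicalClosure _
      (Submodule.subset_span ⟨b₀, h, rfl⟩)
    rw [hbot] at this
    simpa using this
  · have hd : closure (Submodule.span ℂ S : Set ρ.space.carrier) = Set.univ := by
      rw [← Submodule.topologicalClosure_coe, ← hK, htop]
      rfl
    have := clm_eq_zero_of_dense T S hd (by rintro v ⟨c, h, rfl⟩; exact hT c h)
    exact this

lemma exists_forward (W : InducedRepWitness E ρ ρ') (hirr : ρ.Irreducible)
    (b : B) (hb : ρ.π b ≠ 0) :
    ∃ x y : E.X, ρ'.π (E.innA (E.smulB x b) y) ≠ 0 := by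
  -- Step 1: find y z h with π(b)(π(⟨y,z⟩)h) ≠ 0
  have h1 : ∃ y z, ∃ h : ρ.space.carrier, ρ.π b (ρ.π (E.innB y z) h) ≠ 0 := by
    by_contra hcon
    push_neg at hcon
    apply hb
    apply vanish_of_vanish_range hirr
    intro c h
    exact full_vanish E ρ (ρ.π b) h (fun x y => hcon x y h) c
  obtain ⟨y, z, h, hw⟩ := h1
  set w := ρ.π b (ρ.π (E.innB y z) h) with hwdef
  -- Step 2: find x with t x w ≠ 0
  have h2 : ∃ x : E.X, W.t x w ≠ 0 := by
    by_contra hcon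
    push_neg at hcon
    apply hw
    -- ⟪w, π c w⟫ = 0 for all c
    have hg : ∀ c, (⟪w, ρ.π c w⟫ : ℂ) = 0 := by
      intro c
      refine full_vanish E ρ (innerSL ℂ w) w (fun x' y' => ?_) c
      have hxy : (⟪W.t x' w, W.t y' w⟫ : ℂ) = ⟪w, ρ.π (E.innB x' y') w⟫ :=
        W.t_inner y' x' w w
      simp only [innerSL_apply_apply]
      rw [← hxy, hcon x', inner_zero_left]
    -- hence π c w = 0 for all c
    have hpw : ∀ c, ρ.π c w = 0 := by
      intro c
      have hadj : ContinuousLinearMap.adjoint (ρ.π c) = ρ.π (star c) := by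
        rw [← ContinuousLinearMap.star_eq_adjoint, ← map_star]
      have h3 : (⟪ρ.π c w, ρ.π c w⟫ : ℂ) = 0 := by
        rw [← ContinuousLinearMap.adjoint_inner_right (ρ.π c) w (ρ.π c w), hadj]
        have : ρ.π (star c) (ρ.π c w) = ρ.π (star c * c) w := by rw [map_mul]; rfl
        rw [this]
        exact hg (star c * c)
      exact inner_self_eq_zero.mp h3
    -- conclude w = 0
    have hc0 : w = ρ.π (b * E.innB y z) h := by
      rw [hwdef, map_mul]; rfl
    have hadj : ρ.π (b * E.innB y z) =
        ContinuousLinearMap.adjoint (ρ.π (star (b * E.innB y z))) := by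
      rw [← ContinuousLinearMap.star_eq_adjoint, ← map_star, star_star]
    have h4 : (⟪w, ρ.π (b * E.innB y z) h⟫ : ℂ) = 0 := by
      rw [hadj, ContinuousLinearMap.adjoint_inner_right, hpw, inner_zero_left]
    rw [← hc0] at h4
    exact inner_self_eq_zero.mp h4
  obtain ⟨x, hx⟩ := h2
  refine ⟨x, y, fun hzero => hx ?_⟩
  have hfac := factor_forward W x y b
  rw [hzero] at hfac
  have h5 := congrArg (fun T : _ →L[ℂ] _ => T (W.t z h)) hfac
  simp only [ContinuousLinearMap.zero_apply, ContinuousLinearMap.comp_apply,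
    adjoint_Tmap_t, Tmap_apply] at h5
  exact h5.symm

lemma exists_reverse (W : InducedRepWitness E ρ ρ') (a : A) (ha : ρ'.π a ≠ 0) :
    ∃ x y : E.X, ρ.π (E.innB y (E.smulA a x)) ≠ 0 := by
  have h1 : ∃ x, ∃ h : ρ.space.carrier, ρ'.π a (W.t x h) ≠ 0 := by
    by_contra hcon
    push_neg at hcon
    exact ha (clm_eq_zero_of_dense (ρ'.π a) _ W.t_dense
      (by rintro v ⟨x, h, rfl⟩; exact hcon x h))
  obtain ⟨x, h, hw⟩ := h1
  have h2 : ∃ y, ∃ k : ρ.space.carrier,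
      (⟪ρ'.π a (W.t x h), W.t y k⟫ : ℂ) ≠ 0 := by
    by_contra hcon
    push_neg at hcon
    apply hw
    have hzero : innerSL ℂ (ρ'.π a (W.t x h)) = 0 :=
      clm_eq_zero_of_dense _ _ W.t_dense (by rintro v ⟨y, k, rfl⟩; exact hcon y k)
    have h3 : (⟪ρ'.π a (W.t x h), ρ'.π a (W.t x h)⟫ : ℂ) = 0 := by
      have := congrArg (fun f : _ →L[ℂ] ℂ => f (ρ'.π a (W.t x h))) hzero
      simpa using this
    exact inner_self_eq_zero.mp h3
  obtain ⟨y, k, hyk⟩ := h2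
  refine ⟨x, y, fun hzero => ?_⟩
  have hfac := factor_reverse W x y a
  rw [hzero] at hfac
  have h4 := congrArg (fun T : _ →L[ℂ] _ => T h) hfac
  simp only [ContinuousLinearMap.zero_apply, ContinuousLinearMap.comp_apply,
    Tmap_apply] at h4
  -- h4 : 0 = adjoint (Tmap W y) (ρ'.π a (W.t x h))
  apply hyk
  rw [inner_eq_zero_symm]
  have h5 : (⟪W.t y k, ρ'.π a (W.t x h)⟫ : ℂ)
      = ⟪k, ContinuousLinearMap.adjoint (Tmap W y) (ρ'.π a (W.t x h))⟫ := by
    rw [ContinuousLinearMap.adjoint_inner_right, Tmap_apply]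
  rw [h5, ← h4, inner_zero_right]

end AuxProof

/-- Let `X` be an `A`–`B` imprimitivity bimodule, let `π ∈ B̂`, and let
`(π_α)` be a net in `B̂` with `π` as a cluster point.  If `Ind = X-Ind` assigns to each
element of `B̂` the induced element of `Â`, then
`M_U(π, (π_α)) = M_U(X-Ind π, (X-Ind π_α))`. -/
theorem upperMult_inducedRep {A B : Type}
    [NonUnitalCStarAlgebra A] [NonUnitalCStarAlgebra B]
    (E : ImprimitivityBimodule A B)
    (Ind : IrrRep B → IrrRep A)
    (hInd : ∀ σ : IrrRep B, Nonempty (InducedRepWitness E σ.1 (Ind σ).1))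
    {ι : Type} [Preorder ι] [IsDirected ι (· ≤ ·)] [Nonempty ι]
    (π : IrrRep B) (net : ι → IrrRep B)
    (hcluster : MapClusterPt π Filter.atTop net) :
    upperMult π net = upperMult (Ind π) (fun α => Ind (net α)) := by
  have W : ∀ σ : IrrRep B, InducedRepWitness E σ.1 (Ind σ).1 := fun σ => (hInd σ).some
  unfold upperMult
  apply le_antisymm
  · apply sInf_le_sInf
    rintro k ⟨a, ha, hev⟩
    obtain ⟨x, y, hb⟩ := exists_reverse (W π) a ha
    refine ⟨E.innB y (E.smulA a x), hb, ?_⟩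
    refine hev.mono fun α hα => le_trans ?_ hα
    rw [factor_reverse (W (net α)) x y a]
    exact opRank_comp_comp_le _ _ _
  · apply sInf_le_sInf
    rintro k ⟨b, hb, hev⟩
    obtain ⟨x, y, ha⟩ := exists_forward (W π) π.2 b hb
    refine ⟨E.innA (E.smulB x b) y, ha, ?_⟩
    refine hev.mono fun α hα => le_trans ?_ hα
    rw [factor_forward (W (net α)) x y b]
    exact opRank_comp_comp_le _ _ _
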